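/- Under the two-modality linear-Gaussian setup, for every β ∈ [0,1] with β̄ = 1 − β, the matrix K_β = G_βW − I_d satisfies K_β = β K_x + β̄ K_y, and K_β is negative definite. -/

import Mathlib

open Matrix MeasureTheory

private lemma psd_smul {n : Type*} [Fintype n] {A : Matrix n n ℝ} (hA : A.PosSemidef)
    {c : ℝ} (hc : 0 ≤ c) : (c • A).PosSemidef := by
  refine ⟨?_, fun x => ?_⟩
  · unfold Matrix.IsHermitian
    rw [Matrix.conjTranspose_smul, hA.1]
    simp
  · exact (hA.smul hc).2 x

private lemma pd_smul {n : Type*} [Fintype n] {A : Matrix n n ℝ} (hA : A.PosDef)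
    {c : ℝ} (hc : 0 < c) : (c • A).PosDef := by
  refine ⟨?_, fun x hx => ?_⟩
  · unfold Matrix.IsHermitian
    rw [Matrix.conjTranspose_smul, hA.1]
    simp
  · exact (hA.smul hc).2 hx

private lemma conv_posDef {n : Type*} [Fintype n] {M N : Matrix n n ℝ} (hM : M.PosDef)
    (hN : N.PosDef) {β : ℝ} (h0 : 0 ≤ β) (h1 : β ≤ 1) : (β • M + (1 - β) • N).PosDef := by
  rcases eq_or_lt_of_le h0 with h | h
  · simp [← h, hN]
  · exact (pd_smul hM h).add_posSemidef (psd_smul hN.posSemidef (by linarith))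

private lemma neg_K_eq {d m : ℕ} (W : Matrix (Fin m) (Fin d) ℝ) (σ : ℝ) (hσ : 0 < σ) :
    -((Wᵀ * (σ ^ 2 • (1 : Matrix (Fin m) (Fin m) ℝ))⁻¹ * W + 1)⁻¹ * Wᵀ *
        (σ ^ 2 • (1 : Matrix (Fin m) (Fin m) ℝ))⁻¹ * W - 1) =
      (Wᵀ * (σ ^ 2 • (1 : Matrix (Fin m) (Fin m) ℝ))⁻¹ * W + 1)⁻¹ ∧
      (Wᵀ * (σ ^ 2 • (1 : Matrix (Fin m) (Fin m) ℝ))⁻¹ * W + 1).PosDef := by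
  set Ψ : Matrix (Fin m) (Fin m) ℝ := σ ^ 2 • (1 : Matrix (Fin m) (Fin m) ℝ) with hΨ
  have hΨpd : Ψ.PosDef := pd_smul Matrix.PosDef.one (by positivity)
  have hA : (Wᵀ * Ψ⁻¹ * W).PosSemidef := by
    have := hΨpd.inv.posSemidef.conjTranspose_mul_mul_same W
    simpa using this
  have hpd : (Wᵀ * Ψ⁻¹ * W + 1).PosDef := Matrix.PosDef.posSemidef_add hA Matrix.PosDef.one
  refine ⟨?_, hpd⟩
  have hu : IsUnit (Wᵀ * Ψ⁻¹ * W + 1).det := hpd.det_pos.ne'.isUnit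
  have hinv : (Wᵀ * Ψ⁻¹ * W + 1)⁻¹ * (Wᵀ * Ψ⁻¹ * W + 1) = 1 :=
    Matrix.nonsing_inv_mul _ hu
  have hassoc : (Wᵀ * Ψ⁻¹ * W + 1)⁻¹ * Wᵀ * Ψ⁻¹ * W =
      (Wᵀ * Ψ⁻¹ * W + 1)⁻¹ * (Wᵀ * Ψ⁻¹ * W) := by
    simp [Matrix.mul_assoc]
  have h2 : (Wᵀ * Ψ⁻¹ * W + 1)⁻¹ * (Wᵀ * Ψ⁻¹ * W) + (Wᵀ * Ψ⁻¹ * W + 1)⁻¹ = 1 := by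
    rw [← Matrix.mul_one ((Wᵀ * Ψ⁻¹ * W + 1)⁻¹ : Matrix (Fin d) (Fin d) ℝ), Matrix.mul_assoc]
    simp only [Matrix.one_mul, ← Matrix.mul_add]
    exact hinv
  rw [hassoc, neg_sub, sub_eq_iff_eq_add]
  nth_rewrite 1 [← h2]
  exact add_comm _ _

theorem stmt_5    (d p q : ℕ) (hd : 0 < d) (hp : 0 < p) (hq : 0 < q)
    (Wx : Matrix (Fin p) (Fin d) ℝ) (Wy : Matrix (Fin q) (Fin d) ℝ)
    (σx σy : ℝ) (hσx : 0 < σx) (hσy : 0 < σy)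
    (β : ℝ) (hβ : β ∈ Set.Icc (0 : ℝ) 1) :
    let Ψx : Matrix (Fin p) (Fin p) ℝ := σx ^ 2 • (1 : Matrix (Fin p) (Fin p) ℝ)
    let Ψy : Matrix (Fin q) (Fin q) ℝ := σy ^ 2 • (1 : Matrix (Fin q) (Fin q) ℝ)
    let W : Matrix (Fin p ⊕ Fin q) (Fin d) ℝ := Matrix.fromRows Wx Wy
    let Ψ : Matrix (Fin p ⊕ Fin q) (Fin p ⊕ Fin q) ℝ := Matrix.fromBlocks Ψx 0 0 Ψy
    let Gx : Matrix (Fin d) (Fin p) ℝ := (Wxᵀ * Ψx⁻¹ * Wx + 1)⁻¹ * Wxᵀ * Ψx⁻¹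
    let Gy : Matrix (Fin d) (Fin q) ℝ := (Wyᵀ * Ψy⁻¹ * Wy + 1)⁻¹ * Wyᵀ * Ψy⁻¹
    let Gβ : Matrix (Fin d) (Fin p ⊕ Fin q) ℝ := Matrix.fromCols (β • Gx) ((1 - β) • Gy)
    let Kx : Matrix (Fin d) (Fin d) ℝ := Gx * Wx - 1
    let Ky : Matrix (Fin d) (Fin d) ℝ := Gy * Wy - 1
    let Kβ : Matrix (Fin d) (Fin d) ℝ := Gβ * W - 1
    Kβ = β • Kx + (1 - β) • Ky ∧ (-Kβ).PosDef := by
  intro Ψx Ψy W Ψ Gx Gy Gβ Kx Ky Kβ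
  obtain ⟨h0, h1⟩ := hβ
  have heq : Kβ = β • Kx + (1 - β) • Ky := by
    show Gβ * W - 1 = β • (Gx * Wx - 1) + (1 - β) • (Gy * Wy - 1)
    rw [show Gβ * W = (β • Gx) * Wx + ((1 - β) • Gy) * Wy from
      Matrix.fromCols_mul_fromRows _ _ _ _]
    rw [Matrix.smul_mul, Matrix.smul_mul]
    module
  refine ⟨heq, ?_⟩
  obtain ⟨hKx, hpdx⟩ := neg_K_eq Wx σx hσx
  obtain ⟨hKy, hpdy⟩ := neg_K_eq Wy σy hσy
  have : -Kβ = β • (-Kx) + (1 - β) • (-Ky) := by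
    rw [heq]; module
  rw [this, hKx, hKy]
  exact conv_posDef hpdx.inv hpdy.inv h0 h1
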